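/- Let N ∈ ℕ and let F : ℝ → ℂ be N-times continuously differentiable on [0,1] (derivatives within [0,1]) with F^{(k)}(0) = 0 for every k < N. Then for every ε > 0 there exists a polynomial P ∈ ℂ[X] whose coefficients in degrees < N all vanish, such that for every x ∈ [0,1] and every n ≤ N, ‖F^{(n)}(x) − P^{(n)}(x)‖ ≤ ε · x^{N−n}, where P^{(n)} denotes the n-th formal derivative of P. -/

import Mathlib

open Polynomial

/-- Formal antiderivative of a complex polynomial, with zero constant term. -/
noncomputable def antider (q : ℂ[X]) : ℂ[X] :=
  q.sum fun k a => C (a / (k + 1)) * X ^ (k + 1)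

lemma derivative_antider (q : ℂ[X]) : derivative (antider q) = q := by
  rw [antider, Polynomial.sum, map_sum]
  conv_rhs => rw [← Polynomial.sum_C_mul_X_pow_eq q, Polynomial.sum]
  refine Finset.sum_congr rfl fun k _ => ?_
  rw [derivative_C_mul_X_pow]
  have hk : ((k : ℂ) + 1) ≠ 0 := Nat.cast_add_one_ne_zero k
  rw [Nat.add_sub_cancel]
  congr 1
  push_cast
  rw [div_mul_cancel₀ _ hk]

lemma coeff_antider_zero (q : ℂ[X]) : (antider q).coeff 0 = 0 := by
  rw [antider, Polynomial.sum, finset_sum_coeff]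
  refine Finset.sum_eq_zero fun k _ => ?_
  simp [coeff_C_mul, coeff_X_pow]

lemma coeff_antider_succ (q : ℂ[X]) (j : ℕ) :
    (antider q).coeff (j + 1) = q.coeff j / (j + 1) := by
  rw [antider, Polynomial.sum, finset_sum_coeff]
  simp only [coeff_C_mul, coeff_X_pow]
  rw [Finset.sum_eq_single j]
  · simp
  · intro k _ hk
    have h : j + 1 ≠ k + 1 := by omega
    rw [if_neg h, mul_zero]
  · intro hj
    simp [Polynomial.notMem_support_iff.mp hj]

lemma coeff_antider_iterate (m : ℕ) (q : ℂ[X]) :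
    ∀ k < m, (antider^[m] q).coeff k = 0 := by
  induction m with
  | zero => intro k hk; omega
  | succ m ih =>
    intro k hk
    rw [Function.iterate_succ_apply']
    rcases k with _ | j
    · exact coeff_antider_zero _
    · rw [coeff_antider_succ, ih j (by omega)]
      simp

lemma derivative_iterate_antider_iterate (n : ℕ) (q : ℂ[X]) :
    derivative^[n] (antider^[n] q) = q := by
  induction n with
  | zero => rfl
  | succ n ih =>
    rw [Function.iterate_succ_apply, Function.iterate_succ_apply',
      derivative_antider, ih]

lemma derivative_iterate_antider (n N : ℕ) (hn : n ≤ N) (q : ℂ[X]) :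
    derivative^[n] (antider^[N] q) = antider^[N - n] q := by
  have : antider^[N] q = antider^[n] (antider^[N - n] q) := by
    rw [← Function.iterate_add_apply]
    congr 1
    omega
  rw [this, derivative_iterate_antider_iterate]

set_option maxHeartbeats 1000000 in
/-- Weighted Weierstrass approximation: an `N`-times continuously differentiable
function on `[0,1]` vanishing to order `N` at `0` is approximated, together with
all derivatives up to order `N`, by a polynomial with vanishing low coefficients,
with weighted errors `ε x^{N-n}`. -/
theorem weighted_weierstrass_approximation
    (N : ℕ) (F : ℝ → ℂ)
    (hF : ContDiffOn ℝ (N : ℕ∞) F (Set.Icc 0 1))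
    (h0 : ∀ k < N, iteratedDerivWithin k F (Set.Icc 0 1) 0 = 0) :
    ∀ ε > (0:ℝ), ∃ P : Polynomial ℂ,
      (∀ k < N, P.coeff k = 0) ∧
      ∀ x ∈ Set.Icc (0:ℝ) 1, ∀ n ≤ N,
        ‖iteratedDerivWithin n F (Set.Icc 0 1) x -
            (Polynomial.derivative^[n] P).eval (x : ℂ)‖ ≤ ε * x ^ (N - n) := by
  intro ε hε
  set s : Set ℝ := Set.Icc 0 1 with hs_def
  have hs : UniqueDiffOn ℝ s := uniqueDiffOn_Icc one_pos
  -- the top derivative is continuous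
  have hGcont : ContinuousOn (iteratedDerivWithin N F s) s :=
    hF.continuousOn_iteratedDerivWithin le_rfl hs
  -- Weierstrass approximation of the real and imaginary parts
  obtain ⟨p, hp⟩ := exists_polynomial_near_of_continuousOn 0 1
    (fun x => (iteratedDerivWithin N F s x).re)
    (Complex.continuous_re.comp_continuousOn hGcont) (ε / 2) (by positivity)
  obtain ⟨q, hq⟩ := exists_polynomial_near_of_continuousOn 0 1
    (fun x => (iteratedDerivWithin N F s x).im)
    (Complex.continuous_im.comp_continuousOn hGcont) (ε / 2) (by positivity)
  set Q : ℂ[X] := p.map (algebraMap ℝ ℂ) + C Complex.I * q.map (algebraMap ℝ ℂ) with hQ_def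
  have hQeval : ∀ x : ℝ, Q.eval (x : ℂ) = ((p.eval x : ℝ) : ℂ) + Complex.I * ((q.eval x : ℝ) : ℂ) := by
    intro x
    have h1 : ∀ r : ℝ[X], (r.map (algebraMap ℝ ℂ)).eval ((x : ℂ)) = ((r.eval x : ℝ) : ℂ) := by
      intro r
      rw [show ((x : ℂ)) = algebraMap ℝ ℂ x from rfl, Polynomial.eval_map,
        Polynomial.eval₂_at_apply]
      rfl
    simp [hQ_def, h1]
  have hQ : ∀ x ∈ s, ‖iteratedDerivWithin N F s x - Q.eval (x : ℂ)‖ ≤ ε := by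
    intro x hx
    set z := iteratedDerivWithin N F s x - Q.eval (x : ℂ) with hz
    have hre : z.re = (iteratedDerivWithin N F s x).re - p.eval x := by
      simp [hz, hQeval x]
    have him : z.im = (iteratedDerivWithin N F s x).im - q.eval x := by
      simp [hz, hQeval x]
    calc ‖z‖ ≤ |z.re| + |z.im| := Complex.norm_le_abs_re_add_abs_im z
      _ ≤ ε / 2 + ε / 2 := by
          gcongr
          · rw [hre, abs_sub_comm]; exact (hp x hx).le
          · rw [him, abs_sub_comm]; exact (hq x hx).le
      _ = ε := by ring
  set P : ℂ[X] := antider^[N] Q with hP_def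
  have hPQ : derivative^[N] P = Q := derivative_iterate_antider_iterate N Q
  refine ⟨P, fun k hk => coeff_antider_iterate N Q k hk, ?_⟩
  -- the error functions
  set E : ℕ → ℝ → ℂ := fun n x =>
    iteratedDerivWithin n F s x - (derivative^[n] P).eval (x : ℂ) with hE_def
  -- derivative of E n is E (n+1) within s, for n < N
  have hderiv : ∀ n < N, ∀ t ∈ s, HasDerivWithinAt (E n) (E (n + 1) t) s t := by
    intro n hn t ht
    have hFd : HasDerivWithinAt (iteratedDerivWithin n F s)
        (iteratedDerivWithin (n + 1) F s t) s t := by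
      have hdiff : DifferentiableWithinAt ℝ (iteratedDerivWithin n F s) s t :=
        hF.differentiableOn_iteratedDerivWithin (by exact_mod_cast hn) hs t ht
      have := hdiff.hasDerivWithinAt
      rwa [← iteratedDerivWithin_succ] at this
    have hPd : HasDerivAt (fun y : ℝ => (derivative^[n] P).eval (y : ℂ))
        ((derivative^[n + 1] P).eval (t : ℂ)) t := by
      have h1 : HasDerivAt (fun z : ℂ => (derivative^[n] P).eval z)
          ((derivative (derivative^[n] P)).eval (t : ℂ)) (t : ℂ) :=
        Polynomial.hasDerivAt _ _
      rw [← Function.iterate_succ_apply' derivative n P] at h1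
      exact h1.comp_ofReal
    exact hFd.sub hPd.hasDerivWithinAt
  -- continuity of each E n on s, for n ≤ N
  have hEcont : ∀ n ≤ N, ContinuousOn (E n) s := by
    intro n hn
    refine ContinuousOn.sub (hF.continuousOn_iteratedDerivWithin (by exact_mod_cast hn) hs) ?_
    exact (Polynomial.continuous _).comp_continuousOn
      (Complex.continuous_ofReal.continuousOn)
  -- E n vanishes at 0 for n < N
  have hE0 : ∀ n < N, E n 0 = 0 := by
    intro n hn
    have hc : (derivative^[n] P).coeff 0 = 0 := by
      rw [hP_def, derivative_iterate_antider n N hn.le]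
      exact coeff_antider_iterate (N - n) Q 0 (by omega)
    have : (derivative^[n] P).eval ((0 : ℝ) : ℂ) = 0 := by
      rw [Complex.ofReal_zero, ← Polynomial.coeff_zero_eq_eval_zero, hc]
    rw [hE_def]
    simp only [this, h0 n hn, sub_zero]
  -- main induction (downward in n, upward in m = N - n)
  have key : ∀ m : ℕ, ∀ n : ℕ, n + m = N → ∀ x ∈ s, ‖E n x‖ ≤ ε * x ^ m := by
    intro m
    induction m with
    | zero =>
      intro n hn x hx
      have : n = N := by omega
      subst this
      simpa [hE_def, hPQ] using hQ x hx
    | succ m ih =>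
      intro n hn x hx
      have hnN : n < N := by omega
      have hx0 : (0 : ℝ) ≤ x := hx.1
      have hx1 : x ≤ 1 := hx.2
      have hsub : Set.Icc 0 x ⊆ s := Set.Icc_subset_Icc le_rfl hx1
      -- FTC
      have hint : IntervalIntegrable (E (n + 1)) MeasureTheory.volume 0 x :=
        ((hEcont (n + 1) (by omega)).mono (by rw [Set.uIcc_of_le hx0]; exact hsub)).intervalIntegrable
      have hftc : ∫ t in (0:ℝ)..x, E (n + 1) t = E n x - E n 0 := by
        refine intervalIntegral.integral_eq_sub_of_hasDeriv_right_of_le hx0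
          ((hEcont n (by omega)).mono hsub) (fun t ht => ?_) hint
        have hts : t ∈ s := hsub (Set.Ioo_subset_Icc_self ht)
        have hmem : s ∈ nhdsWithin t (Set.Ioi t) :=
          Icc_mem_nhdsGT_of_mem ⟨hts.1, lt_of_lt_of_le ht.2 hx1⟩
        exact (hderiv n hnN t hts).mono_of_mem_nhdsWithin hmem
      have hval : E n x = ∫ t in (0:ℝ)..x, E (n + 1) t := by
        rw [hftc, hE0 n hnN, sub_zero]
      -- bound the integral
      have hbound : ‖∫ t in (0:ℝ)..x, E (n + 1) t‖ ≤ |∫ t in (0:ℝ)..x, ε * t ^ m| := by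
        refine intervalIntegral.norm_integral_le_abs_of_norm_le ?_ ?_
        · refine MeasureTheory.ae_restrict_of_forall_mem
            measurableSet_uIoc fun t ht => ?_
          rw [Set.uIoc_of_le hx0] at ht
          have hts : t ∈ s := hsub ⟨ht.1.le, ht.2⟩
          exact ih (n + 1) (by omega) t hts
        · exact (Continuous.intervalIntegrable (by continuity) 0 x)
      have hcalc : ∫ t in (0:ℝ)..x, ε * t ^ m = ε * (x ^ (m + 1) / (m + 1)) := by
        rw [intervalIntegral.integral_const_mul, integral_pow]
        ring
      have hfinal : ε * (x ^ (m + 1) / (m + 1)) ≤ ε * x ^ (m + 1) := by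
        refine mul_le_mul_of_nonneg_left ?_ hε.le
        refine div_le_self (pow_nonneg hx0 _) ?_
        have hm : (0:ℝ) ≤ (m:ℝ) := Nat.cast_nonneg m
        linarith
      have habs : |∫ t in (0:ℝ)..x, ε * t ^ m| = ε * (x ^ (m + 1) / (m + 1)) := by
        rw [hcalc, abs_of_nonneg (by positivity)]
      calc ‖E n x‖ = ‖∫ t in (0:ℝ)..x, E (n + 1) t‖ := by rw [hval]
        _ ≤ |∫ t in (0:ℝ)..x, ε * t ^ m| := hbound
        _ = ε * (x ^ (m + 1) / (m + 1)) := habs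
        _ ≤ ε * x ^ (m + 1) := hfinal
  intro x hx n hn
  have := key (N - n) n (by omega) x hx
  simpa [hE_def] using this
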